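/- Let R be a Jacobi-diagonalizable Jacobi-orthogonal algebraic curvature tensor on a scalar product space (V, g). If X ∈ V is nonnull, λ ∈ ℝ, Y ∈ V satisfies g(Y, X) = 0 and J_X Y = ε_X λ Y, then J_Y X = ε_Y λ X + Z for some Z ∈ V with g(Z, Z) = 0. -/

import Mathlib

/- Common definitions: scalar product space (V, g) with nondegenerate symmetric bilinear
form g, algebraic curvature tensors, Jacobi operators, and derived notions. -/

variable {V : Type*} [AddCommGroup V] [Module ℝ V]

/-- `R` is quadrilinear and satisfies the symmetries of an algebraic curvature tensor. -/
def IsCurv (R : V → V → V → V → ℝ) : Prop :=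
  (∀ (a : ℝ) (X X' Y Z W : V), R (a • X + X') Y Z W = a * R X Y Z W + R X' Y Z W) ∧
  (∀ (a : ℝ) (X Y Y' Z W : V), R X (a • Y + Y') Z W = a * R X Y Z W + R X Y' Z W) ∧
  (∀ (a : ℝ) (X Y Z Z' W : V), R X Y (a • Z + Z') W = a * R X Y Z W + R X Y Z' W) ∧
  (∀ (a : ℝ) (X Y Z W W' : V), R X Y Z (a • W + W') = a * R X Y Z W + R X Y Z W') ∧
  (∀ X Y Z W : V, R X Y Z W = - R Y X Z W) ∧
  (∀ X Y Z W : V, R X Y Z W = - R X Y W Z) ∧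
  (∀ X Y Z W : V, R X Y Z W = R Z W X Y) ∧
  (∀ X Y Z W : V, R X Y Z W + R Y Z X W + R Z X Y W = 0)

/-- `J X` is the Jacobi operator of `R`: the unique linear map with
`g (J X Y) Z = R Y X X Z` for all `Y Z`. -/
def IsJacobi (g : V →ₗ[ℝ] V →ₗ[ℝ] ℝ) (R : V → V → V → V → ℝ) (J : V → V →ₗ[ℝ] V) : Prop :=
  ∀ X Y Z : V, g (J X Y) Z = R Y X X Z

/-- Jacobi-orthogonality: `g (J_X Y) (J_Y X) = 0` for all mutually orthogonal unit `X Y`. -/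
def JacobiOrthogonal (g : V →ₗ[ℝ] V →ₗ[ℝ] ℝ) (J : V → V →ₗ[ℝ] V) : Prop :=
  ∀ X Y : V, (g X X = 1 ∨ g X X = -1) → (g Y Y = 1 ∨ g Y Y = -1) → g X Y = 0 →
    g (J X Y) (J Y X) = 0
/-- An endomorphism is diagonalizable iff its eigenspaces span. -/
def IsDiagonalizable (f : V →ₗ[ℝ] V) : Prop :=
  (⨆ μ : ℝ, Module.End.eigenspace f μ) = ⊤

/-- `R` (via its Jacobi operator `J`) is Jacobi-diagonalizable. -/
def JacobiDiagonalizable (g : V →ₗ[ℝ] V →ₗ[ℝ] ℝ) (J : V → V →ₗ[ℝ] V) : Prop :=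
  ∀ X : V, g X X ≠ 0 → IsDiagonalizable (J X)

section Aux
variable {V : Type*} [AddCommGroup V] [Module ℝ V]
variable {R : V → V → V → V → ℝ}

lemma Rzero2 (hR : IsCurv R) (u z w : V) : R u 0 z w = 0 := by
  have h := hR.2.1 1 u 0 0 z w
  simp at h
  linarith

lemma Rzero3 (hR : IsCurv R) (u z w : V) : R u z 0 w = 0 := by
  have h := hR.2.2.1 1 u z 0 0 w
  simp at h
  linarith

lemma Rff (hR : IsCurv R) (u v c : V) : R u u v c = 0 := by
  have h := hR.2.2.2.2.1 u u v c
  linarith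

/-- R a b b c = R c b b a -/
lemma Rsa (hR : IsCurv R) (a b c : V) : R a b b c = R c b b a := by
  rw [hR.2.2.2.2.2.1 a b b c, hR.2.2.2.2.2.2.1 a b c b, hR.2.2.2.2.2.1 c b a b,
    hR.2.2.2.2.2.2.1 c b b a]
  ring

end Aux

section Aux2
variable {V : Type*} [AddCommGroup V] [Module ℝ V]
variable {g : V →ₗ[ℝ] V →ₗ[ℝ] ℝ} {R : V → V → V → V → ℝ} {J : V → V →ₗ[ℝ] V}

lemma Jsmul (hgnd : ∀ x : V, (∀ y : V, g x y = 0) → x = 0) (hR : IsCurv R)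
    (hJ : IsJacobi g R J) (s : ℝ) (A B : V) : J (s • A) B = (s^2) • J A B := by
  have h : J (s • A) B - (s^2) • J A B = 0 := by
    apply hgnd
    intro D
    have e1 : (s : ℝ) • A = s • A + 0 := by rw [add_zero]
    have e2 : R B (s • A) (s • A) D = s^2 * R B A A D := by
      rw [e1, hR.2.1 s B A 0 (s • A + 0) D, hR.2.2.1 s B A A 0 D, hR.2.2.1 s B 0 A 0 D,
        Rzero2 hR, Rzero3 hR, Rzero3 hR]
      ring
    have := hJ (s • A) B D
    have h2 := hJ A B D
    simp only [map_sub, map_smul, LinearMap.sub_apply, LinearMap.smul_apply, smul_eq_mul]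
    rw [this, e2, h2]
    ring
  exact sub_eq_zero.mp h
  
end Aux2

section Aux3
variable {V : Type*} [AddCommGroup V] [Module ℝ V]
variable {g : V →ₗ[ℝ] V →ₗ[ℝ] ℝ} {R : V → V → V → V → ℝ} {J : V → V →ₗ[ℝ] V}

/-- normalization: scaling a nonnull vector to a unit vector -/
lemma unit_scale (A : V) (hA : g A A ≠ 0) :
    ∃ s : ℝ, 0 < s ∧ (g (s • A) (s • A) = 1 ∨ g (s • A) (s • A) = -1) := by
  refine ⟨(Real.sqrt |g A A|)⁻¹, ?_, ?_⟩
  · exact inv_pos.mpr (Real.sqrt_pos.mpr (abs_pos.mpr hA))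
  · have hsq : Real.sqrt |g A A| ^ 2 = |g A A| := Real.sq_sqrt (abs_nonneg _)
    have hval : g ((Real.sqrt |g A A|)⁻¹ • A) ((Real.sqrt |g A A|)⁻¹ • A)
        = g A A / |g A A| := by
      simp only [map_smul, LinearMap.smul_apply, smul_eq_mul]
      rw [div_eq_mul_inv, ← hsq, Real.sqrt_sq (Real.sqrt_nonneg _)]
      ring
    rw [hval]
    rcases abs_cases (g A A) with ⟨h1, _⟩ | ⟨h1, _⟩
    · left; rw [h1]; field_simp
    · right; rw [h1]; field_simp

/-- extended orthogonality: both nonnull -/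
lemma orth_nonnull (hgsymm : ∀ x y : V, g x y = g y x)
    (hgnd : ∀ x : V, (∀ y : V, g x y = 0) → x = 0) (hR : IsCurv R)
    (hJ : IsJacobi g R J) (horth : JacobiOrthogonal g J)
    (A B : V) (hA : g A A ≠ 0) (hB : g B B ≠ 0) (hAB : g A B = 0) :
    g (J A B) (J B A) = 0 := by
  obtain ⟨s, hs, hsu⟩ := unit_scale A hA
  obtain ⟨t, ht, htu⟩ := unit_scale B hB
  have hortho : g (s • A) (t • B) = 0 := by
    simp only [map_smul, LinearMap.smul_apply, smul_eq_mul, hAB]; ring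
  have key := horth (s • A) (t • B) hsu htu hortho
  rw [Jsmul hgnd hR hJ s A (t • B), Jsmul hgnd hR hJ t B (s • A)] at key
  simp only [map_smul, LinearMap.smul_apply, smul_eq_mul] at key
  have hfac : (s^3 * t^3) * g (J A B) (J B A) = 0 := by linarith [key]
  rcases mul_eq_zero.mp hfac with h | h
  · exact absurd h (by positivity)
  · exact h

end Aux3

section Aux4
variable {V : Type*} [AddCommGroup V] [Module ℝ V]
variable {g : V →ₗ[ℝ] V →ₗ[ℝ] ℝ} {R : V → V → V → V → ℝ} {J : V → V →ₗ[ℝ] V}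

/-- extended orthogonality: A nonnull, B arbitrary -/
lemma orth_ext (hgsymm : ∀ x y : V, g x y = g y x)
    (hgnd : ∀ x : V, (∀ y : V, g x y = 0) → x = 0) (hR : IsCurv R)
    (hJ : IsJacobi g R J) (horth : JacobiOrthogonal g J)
    (A B : V) (hA : g A A ≠ 0) (hAB : g A B = 0) :
    g (J A B) (J B A) = 0 := by
  by_cases hB : g B B ≠ 0
  · exact orth_nonnull hgsymm hgnd hR hJ horth A B hA hB hAB
  push_neg at hB
  by_cases hB0 : B = 0
  · subst hB0; simp
  -- find U with g A U = 0 and g B U ≠ 0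
  obtain ⟨U, hAU, hBU⟩ : ∃ U : V, g A U = 0 ∧ g B U ≠ 0 := by
    by_contra hcon
    push_neg at hcon
    apply hB0
    apply hgnd
    intro C
    have h1 : g A (C - (g A C / g A A) • A) = 0 := by
      simp only [map_sub, map_smul, smul_eq_mul]
      field_simp
      ring
    have h2 := hcon _ h1
    simp only [map_sub, map_smul, smul_eq_mul] at h2
    have h3 : g B A = 0 := by rw [hgsymm]; exact hAB
    rw [h3] at h2
    linarith
  set γ := g B U with hγ
  set ε := g U U with hε
  set W := J A B with hW
  set W' := J A U with hW'
  set φ₀ := R A B B W with hφ₀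
  set φ₁ := R A B B W' + R A U B W + R A B U W with hφ₁
  set φ₂ := R A U B W' + R A B U W' + R A U U W with hφ₂
  set φ₃ := R A U U W' with hφ₃
  -- key polynomial identity
  have KI : ∀ t : ℝ, g (J A (B + t • U)) (J (B + t • U) A)
      = φ₀ + φ₁ * t + φ₂ * t^2 + φ₃ * t^3 := by
    intro t
    have e1 : J A (B + t • U) = t • W' + W := by
      rw [map_add, map_smul]; rw [add_comm]
    rw [hgsymm, hJ]
    rw [e1]
    rw [show B + t • U = t • U + B from add_comm _ _]
    rw [hR.2.1 t A U B (t • U + B) (t • W' + W)]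
    rw [hR.2.2.1 t A U U B (t • W' + W), hR.2.2.1 t A B U B (t • W' + W)]
    rw [hR.2.2.2.1 t A U U W' W, hR.2.2.2.1 t A U B W' W,
      hR.2.2.2.1 t A B U W' W, hR.2.2.2.1 t A B B W' W]
    simp only [hφ₀, hφ₁, hφ₂, hφ₃]
    ring
  -- the polynomial vanishes at suitable points
  have hvan : ∀ t : ℝ, t ≠ 0 → 2 * γ + t * ε ≠ 0 →
      φ₀ + φ₁ * t + φ₂ * t^2 + φ₃ * t^3 = 0 := by
    intro t ht0 htε
    rw [← KI t]
    have hBt : g (B + t • U) (B + t • U) = t * (2 * γ + t * ε) := by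
      simp only [map_add, map_smul, LinearMap.add_apply, LinearMap.smul_apply, smul_eq_mul]
      rw [hB]
      have : g U B = γ := by rw [hgsymm]
      rw [this, ← hγ, ← hε]
      ring
    have hBtne : g (B + t • U) (B + t • U) ≠ 0 := by
      rw [hBt]; exact mul_ne_zero ht0 htε
    have hABt : g A (B + t • U) = 0 := by
      simp only [map_add, map_smul, smul_eq_mul, hAB, hAU]; ring
    exact orth_nonnull hgsymm hgnd hR hJ horth A (B + t • U) hA hBtne hABt
  -- pick a scale avoiding the two bad points
  set c : ℝ := |2 * γ / ε| + 1 with hc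
  have hcpos : 0 < c := by positivity
  have hgood : ∀ t : ℝ, c ≤ |t| → 2 * γ + t * ε ≠ 0 := by
    intro t hct h0
    by_cases hε0 : ε = 0
    · rw [hε0] at h0; simp at h0; exact hBU (by rw [hγ]; linarith)
    · have h1 : t * ε = -(2 * γ) := by linarith
      have h2 : |t * ε| = |2 * γ| := by rw [h1, abs_neg]
      rw [abs_mul] at h2
      have h3 : |2 * γ / ε| = |2 * γ| / |ε| := abs_div _ _
      have h4 : 0 < |ε| := abs_pos.mpr hε0
      have h5 : |2 * γ| / |ε| + 1 ≤ |t| := by rw [hc, h3] at hct; exact hct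
      have h6 : (|2 * γ| / |ε| + 1) * |ε| ≤ |t| * |ε| := by
        apply mul_le_mul_of_nonneg_right h5 (le_of_lt h4)
      rw [h2] at h6
      have h7 : |2 * γ| / |ε| * |ε| = |2 * γ| := by field_simp
      nlinarith
  have E1 := hvan c (ne_of_gt hcpos) (hgood c (by rw [abs_of_pos hcpos]))
  have E2 := hvan (-c) (by linarith) (hgood (-c) (by rw [abs_neg, abs_of_pos hcpos]))
  have E3 := hvan (2*c) (by linarith) (hgood (2*c) (by rw [abs_of_pos (by linarith)]; linarith))
  have E4 := hvan (-(2*c)) (by linarith)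
    (hgood (-(2*c)) (by rw [abs_neg, abs_of_pos (by linarith)]; linarith))
  have hφ0 : φ₀ = 0 := by linear_combination (4*(E1+E2) - (E3+E4))/6
  have := KI 0
  simp only [zero_smul, add_zero] at this
  rw [this]
  rw [hφ0]; ring

end Aux4

section Aux5
variable {V : Type*} [AddCommGroup V] [Module ℝ V]

lemma main_calc {g : V →ₗ[ℝ] V →ₗ[ℝ] ℝ} {R : V → V → V → V → ℝ} {J : V → V →ₗ[ℝ] V}
    (hgsymm : ∀ x y : V, g x y = g y x)
    (hgnd : ∀ x : V, (∀ y : V, g x y = 0) → x = 0) (hR : IsCurv R)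
    (hJ : IsJacobi g R J) (horth : JacobiOrthogonal g J)
    (X : V) (hX : g X X ≠ 0) (l : ℝ) (Y : V)
    (hYX : g Y X = 0) (hYeig : J X Y = (g X X * l) • Y)
    (a : ℝ) (ha : a ≠ 0) (hA : g X X + a^2 * g Y Y ≠ 0) :
    g (J Y X) (J Y X) = g X X * (g Y Y)^2 * l^2 := by
  have hXY : g X Y = 0 := by rw [hgsymm]; exact hYX
  -- scalar reduction lemmas
  have h1 : ∀ C : V, R Y X X C = (g X X * l) * g Y C := by
    intro C
    rw [← hJ X Y C, hYeig]
    simp [map_smul]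
  have h2 : ∀ C : V, R X Y Y C = g (J Y X) C := fun C => (hJ Y X C).symm
  have h3 : ∀ C : V, R X Y X C = -((g X X * l) * g Y C) := by
    intro C
    rw [hR.2.2.2.2.2.2.1 X Y X C, hR.2.2.2.2.1 X C X Y, Rsa hR C X Y, h1 C]
  have h4 : ∀ C : V, R Y X Y C = -(g (J Y X) C) := by
    intro C
    rw [hR.2.2.2.2.2.2.1 Y X Y C, hR.2.2.2.2.1 Y C Y X, Rsa hR C Y X, h2 C]
  -- facts about P := J Y X
  have gPY : g (J Y X) Y = 0 := by
    have e := hJ Y X Y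
    have e2 := hR.2.2.2.2.2.1 X Y Y Y
    rw [e]; linarith
  obtain ⟨b, hb⟩ : ∃ b : ℝ, b * g X X = -(a * g Y Y) :=
    ⟨-(a * g Y Y) / g X X, by field_simp⟩
  set A : V := X + a • Y with hAdef
  set B : V := Y + b • X with hBdef
  have gAA : g A A = g X X + a^2 * g Y Y := by
    simp only [hAdef, map_add, map_smul, LinearMap.add_apply, LinearMap.smul_apply,
      smul_eq_mul, hXY, hYX]
    ring
  have gAB : g A B = 0 := by
    simp only [hAdef, hBdef, map_add, map_smul, LinearMap.add_apply, LinearMap.smul_apply,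
      smul_eq_mul, hXY, hYX]
    linarith [hb]
  have gAAne : g A A ≠ 0 := by rw [gAA]; exact hA
  have N := orth_ext hgsymm hgnd hR hJ horth A B gAAne gAB
  -- expansion of g (J B A) C
  have SB : ∀ C : V, g (J B A) C
      = (1 - a*b) * (g (J Y X) C - b * (g X X * l) * g Y C) := by
    intro C
    rw [hJ B A C]
    rw [show A = a • Y + X from by rw [hAdef, add_comm]]
    rw [show B = b • X + Y from by rw [hBdef, add_comm]]
    rw [hR.1 a Y X (b • X + Y) (b • X + Y) C]
    rw [hR.2.1 b Y X Y (b • X + Y) C, hR.2.1 b X X Y (b • X + Y) C]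
    rw [hR.2.2.1 b Y X X Y C, hR.2.2.1 b Y Y X Y C,
      hR.2.2.1 b X X X Y C, hR.2.2.1 b X Y X Y C]
    rw [h1 C, h2 C, h3 C, h4 C]
    simp only [Rff hR]
    ring
  -- expansion of g (J A B) (J B A)
  have SA : g (J A B) (J B A)
      = (1 - a*b) * ((g X X * l) * g Y (J B A) - a * g (J Y X) (J B A)) := by
    rw [hJ A B (J B A)]
    rw [show B = b • X + Y from by rw [hBdef, add_comm]]
    rw [show A = a • Y + X from by rw [hAdef, add_comm]]
    rw [hR.1 b X Y (a • Y + X) (a • Y + X) (J (b • X + Y) (a • Y + X))]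
    rw [hR.2.1 a X Y X (a • Y + X) _, hR.2.1 a Y Y X (a • Y + X) _]
    rw [hR.2.2.1 a X Y Y X _, hR.2.2.1 a X X Y X _,
      hR.2.2.1 a Y Y Y X _, hR.2.2.1 a Y X Y X _]
    rw [h1 _, h2 _, h3 _, h4 _]
    simp only [Rff hR]
    ring
  have vY : g Y (J B A) = -((1 - a*b) * (b * (g X X * l) * g Y Y)) := by
    rw [hgsymm, SB Y, gPY]; ring
  have vP : g (J Y X) (J B A) = (1 - a*b) * g (J Y X) (J Y X) := by
    rw [hgsymm, SB (J Y X)]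
    rw [show g Y (J Y X) = 0 from by rw [hgsymm]; exact gPY]
    ring
  rw [SA, vY, vP] at N
  have hab : (1 - a*b) * g X X = g X X + a^2 * g Y Y := by
    linear_combination (-a) * hb
  have habne : (1 - a*b) ≠ 0 := by
    intro h0
    rw [h0] at hab
    simp at hab
    exact hA (by linarith)
  have key : (1 - a*b)^2 * (a * (g (J Y X) (J Y X) - g X X * (g Y Y)^2 * l^2)) = 0 := by
    linear_combination (-1) * N + (-((1 - a*b)^2 * g X X * g Y Y * l^2)) * hb
  rcases mul_eq_zero.mp key with h | h
  · exact absurd h (pow_ne_zero 2 habne)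
  · rcases mul_eq_zero.mp h with h' | h'
    · exact absurd h' ha
    · linarith

end Aux5


/-- for Jacobi-diagonalizable Jacobi-orthogonal R, nonnull X, and Y with
g(Y,X) = 0 and J_X Y = ε_X λ Y, one has J_Y X = ε_Y λ X + Z with g(Z,Z) = 0. -/
theorem stmt_7 {V : Type*} [AddCommGroup V] [Module ℝ V] [FiniteDimensional ℝ V]
(g : V →ₗ[ℝ] V →ₗ[ℝ] ℝ) (hgsymm : ∀ x y : V, g x y = g y x)
    (hgnd : ∀ x : V, (∀ y : V, g x y = 0) → x = 0)
    (R : V → V → V → V → ℝ) (hR : IsCurv R)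
    (J : V → V →ₗ[ℝ] V) (hJ : IsJacobi g R J)
    (hdiag : JacobiDiagonalizable g J) (horth : JacobiOrthogonal g J)
    (X : V) (hX : g X X ≠ 0) (l : ℝ) (Y : V)
    (hYX : g Y X = 0) (hYeig : J X Y = (g X X * l) • Y) :
    ∃ Z : V, J Y X = (g Y Y * l) • X + Z ∧ g Z Z = 0 := by
  have hgPP : g (J Y X) (J Y X) = g X X * (g Y Y)^2 * l^2 := by
    by_cases hs : g X X + g Y Y = 0
    · refine main_calc hgsymm hgnd hR hJ horth X hX l Y hYX hYeig 2 (by norm_num) ?_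
      intro h0
      have : g X X = 0 := by nlinarith
      exact hX this
    · refine main_calc hgsymm hgnd hR hJ horth X hX l Y hYX hYeig 1 one_ne_zero ?_
      intro h0
      apply hs
      nlinarith
  have gPX : g (J Y X) X = g X X * g Y Y * l := by
    rw [hJ Y X X, hR.2.2.2.2.2.2.1 X Y Y X, ← hJ X Y Y, hYeig]
    simp only [map_smul, LinearMap.smul_apply, smul_eq_mul]
    ring
  refine ⟨J Y X - (g Y Y * l) • X, by abel, ?_⟩
  have gXP : g X (J Y X) = g X X * g Y Y * l := by rw [hgsymm]; exact gPX
  simp only [map_sub, map_smul, LinearMap.sub_apply, LinearMap.smul_apply, smul_eq_mul]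
  rw [hgPP, gPX, gXP]
  ring
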